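/- Let δ > 0 be a real number and let 1 ≤ n_i ≤ n be integers. Define n_v(0) = 3, n_v(u) = 6(δ+4)^{u-1} for u ≥ 1, s(u,m) = 2(δ+2)^{m-u}, and k(u,m) = (2(δ+2)^{m-u} + 2δ)/(δ+1). Then ( Σ_{u=0}^{n_i−1} n_v(u)·s(u,n_i−1)·k(u,n) + Σ_{u=n_i+1}^{n} n_v(n_i)·s(n_i,u−1)·k(u,n) ) / ( n_v(n_i)·k(n_i,n) ) + 1 = [ (δ+1)(δ+2)^{n+n_i}(δ+4)^{1−n_i} − 2(δ+2)^{1+n−n_i} + δ²(δ+3) ] / [ δ(δ+3)((δ+2)^{n−n_i} + δ) ] + (δ−1)/(δ+1) + 2(2+δ+n−n_i) / (2+δ+δ(2+δ)^{1+n_i−n}). -/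

import Mathlib

/-- Average nearest-neighbor degree of vertices created at iteration `ni`. -/
theorem stmt8 (δ : ℝ) (hδ : 0 < δ) (ni n : ℕ) (h1 : 1 ≤ ni) (h2 : ni ≤ n)
    (nv : ℕ → ℝ) (hnv0 : nv 0 = 3)
    (hnv : ∀ u : ℕ, 1 ≤ u → nv u = 6 * (δ + 4) ^ (u - 1))
    (s k : ℕ → ℕ → ℝ)
    (hs : ∀ u m : ℕ, u ≤ m → s u m = 2 * (δ + 2) ^ (m - u))
    (hk : ∀ u m : ℕ, u ≤ m → k u m = (2 * (δ + 2) ^ (m - u) + 2 * δ) / (δ + 1)) :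
    ((∑ u ∈ Finset.range ni, nv u * s u (ni - 1) * k u n) +
        ∑ u ∈ Finset.Icc (ni + 1) n, nv ni * s ni (u - 1) * k u n) /
      (nv ni * k ni n) + 1 =
    ((δ + 1) * (δ + 2) ^ (n + ni) * (δ + 4) ^ (1 - (ni : ℤ)) -
        2 * (δ + 2) ^ (1 + n - ni) + δ ^ 2 * (δ + 3)) /
      (δ * (δ + 3) * ((δ + 2) ^ (n - ni) + δ)) +
    (δ - 1) / (δ + 1) +
    2 * (2 + δ + (n : ℝ) - (ni : ℝ)) / (2 + δ + δ * (2 + δ) ^ (1 + (ni : ℤ) - (n : ℤ))) := by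
  obtain ⟨p, rfl⟩ : ∃ p, ni = p + 1 := ⟨ni - 1, by omega⟩
  obtain ⟨q, rfl⟩ : ∃ q, n = p + 1 + q := ⟨n - (p + 1), by omega⟩
  have hd1 : (0:ℝ) < δ + 1 := by linarith
  have hd2 : (0:ℝ) < δ + 2 := by linarith
  have hd3 : (0:ℝ) < δ + 3 := by linarith
  have hd4 : (0:ℝ) < δ + 4 := by linarith
  have hA : ((δ+4) - (δ+2)^2 : ℝ) ≠ 0 := by nlinarith
  have hGa1 : ∑ u ∈ Finset.range p, (δ+4)^u * (δ+2)^(p-1-u)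
      = ((δ+4)^p - (δ+2)^p) / 2 := by
    have h := geom_sum₂_mul (δ+4) (δ+2) p
    rw [show (δ+4) - (δ+2) = (2:ℝ) by ring] at h
    exact eq_div_of_mul_eq two_ne_zero h
  have hGa2 : ∑ u ∈ Finset.range p, (δ+4)^u * (δ+2)^(2*(p-1-u))
      = ((δ+4)^p - (δ+2)^(2*p)) / ((δ+4) - (δ+2)^2) := by
    have h := geom_sum₂_mul (δ+4) ((δ+2)^2) p
    simp only [← pow_mul] at h
    exact eq_div_of_mul_eq hA h
  have hS1 : (∑ u ∈ Finset.range (p+1), nv u * s u ((p+1) - 1) * k u (p+1+q))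
      = 3 * (2*(δ+2)^p) * ((2*(δ+2)^(p+1+q) + 2*δ)/(δ+1))
        + ((24*(δ+2)^(q+1)/(δ+1)) * (((δ+4)^p - (δ+2)^(2*p))/((δ+4) - (δ+2)^2))
           + (24*δ/(δ+1)) * (((δ+4)^p - (δ+2)^p)/2)) := by
    rw [Finset.sum_range_succ']
    have h0 : nv 0 * s 0 ((p+1)-1) * k 0 (p+1+q)
        = 3 * (2*(δ+2)^p) * ((2*(δ+2)^(p+1+q) + 2*δ)/(δ+1)) := by
      rw [hnv0, hs 0 ((p+1)-1) (by omega), hk 0 (p+1+q) (by omega)]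
      have e1 : (p+1)-1 - 0 = p := by omega
      have e2 : (p+1+q) - 0 = p+1+q := by omega
      rw [e1, e2]
    have h1 : ∑ u ∈ Finset.range p, nv (u+1) * s (u+1) ((p+1)-1) * k (u+1) (p+1+q)
        = ∑ u ∈ Finset.range p,
            ((24*(δ+2)^(q+1)/(δ+1)) * ((δ+4)^u * (δ+2)^(2*(p-1-u)))
             + (24*δ/(δ+1)) * ((δ+4)^u * (δ+2)^(p-1-u))) := by
      refine Finset.sum_congr rfl fun u hu => ?_
      have hup : u < p := Finset.mem_range.mp hu
      rw [hnv (u+1) (by omega), hs (u+1) ((p+1)-1) (by omega),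
        hk (u+1) (p+1+q) (by omega)]
      have e1 : (u+1) - 1 = u := by omega
      have e2 : ((p+1)-1) - (u+1) = p - 1 - u := by omega
      have e3 : (p+1+q) - (u+1) = (q+1) + (p-1-u) := by omega
      rw [e1, e2, e3, pow_add]
      field_simp
      ring
    rw [h1, Finset.sum_add_distrib, ← Finset.mul_sum, ← Finset.mul_sum, hGa2, hGa1, h0]
    ring
  have hkden : k (p+1) (p+1+q) = (2*(δ+2)^q + 2*δ)/(δ+1) := by
    rw [hk (p+1) (p+1+q) (by omega)]
    have e : (p+1+q) - (p+1) = q := by omega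
    rw [e]
  have hnvden : nv (p+1) = 6 * (δ+4)^p := by
    rw [hnv (p+1) (by omega)]
    norm_num
  rcases Nat.eq_zero_or_pos q with hq | hq
  · subst hq
    rw [show Finset.Icc (p+1+1) (p+1+0) = ∅ from Finset.Icc_eq_empty (by omega),
      Finset.sum_empty, hS1, hnvden, hkden]
    have ez1 : (1 - ((p+1:ℕ):ℤ)) = -(p:ℤ) := by push_cast; ring
    have ez2 : (1 + ((p+1:ℕ):ℤ) - ((p+1+0:ℕ):ℤ)) = 1 := by push_cast; ring
    rw [ez1, ez2, zpow_neg, zpow_natCast, zpow_one]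
    have e1 : 1 + (p+1+0) - (p+1) = 1 := by omega
    have e2 : (p+1+0) - (p+1) = 0 := by omega
    rw [e1, e2]
    have hb : ((δ:ℝ)+4)^p ≠ 0 := pow_ne_zero _ hd4.ne'
    have h5 : ((2:ℝ) + δ + δ * (2 + δ)) ≠ 0 := by nlinarith
    push_cast
    field_simp
    ring
  · obtain ⟨r, rfl⟩ : ∃ r, q = r + 1 := ⟨q - 1, by omega⟩
    have hGeom : ∑ i ∈ Finset.range (r+1), (δ+2)^i = ((δ+2)^(r+1) - 1)/(δ+1) := by
      have h := geom_sum_mul (δ+2) (r+1)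
      rw [show (δ+2) - 1 = (δ:ℝ)+1 by ring] at h
      exact eq_div_of_mul_eq hd1.ne' h
    have hS2 : ∑ u ∈ Finset.Icc (p+1+1) (p+1+(r+1)), nv (p+1) * s (p+1) (u-1) * k u (p+1+(r+1))
        = (r+1) * ((24*(δ+4)^p/(δ+1)) * (δ+2)^r)
          + (24*δ*(δ+4)^p/(δ+1)) * (((δ+2)^(r+1) - 1)/(δ+1)) := by
      rw [← Finset.Ico_add_one_right_eq_Icc, Finset.sum_Ico_eq_sum_range]
      have e : (p+1+(r+1)) + 1 - (p+1+1) = r + 1 := by omega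
      rw [e]
      have h1 : ∑ i ∈ Finset.range (r+1),
          nv (p+1) * s (p+1) ((p+1+1+i)-1) * k (p+1+1+i) (p+1+(r+1))
          = ∑ i ∈ Finset.range (r+1),
            ((24*(δ+4)^p/(δ+1)) * (δ+2)^r + (24*δ*(δ+4)^p/(δ+1)) * (δ+2)^i) := by
        refine Finset.sum_congr rfl fun i hi => ?_
        have hir : i < r + 1 := Finset.mem_range.mp hi
        rw [hnvden, hs (p+1) ((p+1+1+i)-1) (by omega),
          hk (p+1+1+i) (p+1+(r+1)) (by omega)]
        have e1 : ((p+1+1+i)-1) - (p+1) = i := by omega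
        have e2 : (p+1+(r+1)) - (p+1+1+i) = r - i := by omega
        rw [e1, e2]
        have e3 : (δ+2)^(r-i) = (δ+2)^r / (δ+2)^i := by
          rw [eq_div_iff (pow_ne_zero _ hd2.ne'), ← pow_add]
          congr 1
          omega
        rw [e3]
        field_simp
        ring
      rw [h1, Finset.sum_add_distrib, Finset.sum_const, Finset.card_range,
        ← Finset.mul_sum, hGeom, nsmul_eq_mul]
      push_cast
      ring
    rw [hS1, hS2, hnvden, hkden]
    have ez1 : (1 - ((p+1:ℕ):ℤ)) = -(p:ℤ) := by push_cast; ring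
    have ez2 : (1 + ((p+1:ℕ):ℤ) - ((p+1+(r+1):ℕ):ℤ)) = -(r:ℤ) := by push_cast; ring
    rw [ez1, ez2, zpow_neg, zpow_natCast, zpow_neg, zpow_natCast]
    have e1 : 1 + (p+1+(r+1)) - (p+1) = r + 2 := by omega
    have e2 : (p+1+(r+1)) - (p+1) = r + 1 := by omega
    rw [e1, e2]
    have hb : ((δ:ℝ)+4)^p ≠ 0 := pow_ne_zero _ hd4.ne'
    have hc : ((2:ℝ)+δ)^r ≠ 0 := pow_ne_zero _ (by linarith)
    have hc' : ((δ:ℝ)+2)^r ≠ 0 := pow_ne_zero _ hd2.ne'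
    have h5 : (0:ℝ) < (δ+2)^(r+1) + δ := by positivity
    have h6 : (0:ℝ) < 2 + δ + δ * ((2+δ)^r)⁻¹ := by positivity
    have h7 : (0:ℝ) < 2*(δ+2)^(r+1) + 2*δ := by positivity
    push_cast
    field_simp
    ring
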